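/- arXiv:1104.4468 — 2 statements merged into one kernel-verified Lean document; each statement's English description precedes it below -/
import Mathlib

section
/- Let J be the all-ones matrix on a finite set D and σ a Hermitian matrix on D with unit diagonal such that (J−σ)∘(J−σ) = λ(J−σ) for some λ > 0. Let Γ be a Hermitian matrix satisfying Γ ∘ (J−σ) = λΓ, with operator norm ‖Γ‖ = d, and let v be a unit principal eigenvector of Γ with eigenvalue d. For γ > 0 define Γ_m = I + γ(dI − Γ). Then: Tr(Γ_m vv*) = 1; Tr(Γ_m (σ ∘ vv*)) = 1 + λγd; and I ⪯ Γ_m ⪯ (1 + 2γd)·I. -/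
open Matrix
open scoped ComplexOrder

/-- Operator (spectral) norm of a matrix. -/
noncomputable def opNorm {n : Type*} [Fintype n] [DecidableEq n] (A : Matrix n n ℂ) : ℝ :=
  ‖LinearMap.toContinuousLinearMap (Matrix.toEuclideanLin A)‖

/-- The rank-one matrix `vv*`. -/
def outer {D : Type*} (v : D → ℂ) : Matrix D D ℂ :=
  Matrix.of fun x y => v x * starRingEnd ℂ (v y)

section Aux

variable {D : Type*} [Fintype D] [DecidableEq D]

lemma aux_herm_form_real (A : Matrix D D ℂ) (hA : A.IsHermitian) (x : D → ℂ) :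
    star x ⬝ᵥ A *ᵥ x = ((star x ⬝ᵥ A *ᵥ x).re : ℂ) := by
  have h : star (star x ⬝ᵥ A *ᵥ x) = star x ⬝ᵥ A *ᵥ x := by
    nth_rewrite 1 [Matrix.star_dotProduct]
    rw [star_star, Matrix.star_mulVec, ← dotProduct_mulVec, hA]
  rw [Complex.star_def, Complex.conj_eq_iff_re] at h
  exact h.symm

lemma aux_form_inner (A : Matrix D D ℂ) (x : D → ℂ) :
    star x ⬝ᵥ A *ᵥ x =
      (inner ℂ ((WithLp.equiv 2 (D → ℂ)).symm x)
        (Matrix.toEuclideanLin A ((WithLp.equiv 2 (D → ℂ)).symm x)) : ℂ) := by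
  rw [dotProduct_comm]; rfl

lemma aux_self_form (x : D → ℂ) :
    star x ⬝ᵥ x = ((‖(WithLp.equiv 2 (D → ℂ)).symm x‖ ^ 2 : ℝ) : ℂ) := by
  have h : star x ⬝ᵥ x =
      (inner ℂ ((WithLp.equiv 2 (D → ℂ)).symm x) ((WithLp.equiv 2 (D → ℂ)).symm x) : ℂ) := by
    rw [dotProduct_comm]; rfl
  rw [h, inner_self_eq_norm_sq_to_K]
  norm_cast

lemma aux_bound (A : Matrix D D ℂ) (x : D → ℂ) :
    ‖star x ⬝ᵥ A *ᵥ x‖ ≤ opNorm A * ‖(WithLp.equiv 2 (D → ℂ)).symm x‖ ^ 2 := by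
  rw [aux_form_inner]
  set y := (WithLp.equiv 2 (D → ℂ)).symm x
  calc ‖(inner ℂ y (Matrix.toEuclideanLin A y) : ℂ)‖ ≤ ‖y‖ * ‖Matrix.toEuclideanLin A y‖ :=
        norm_inner_le_norm _ _
    _ ≤ ‖y‖ * (opNorm A * ‖y‖) := by
        refine mul_le_mul_of_nonneg_left ?_ (norm_nonneg _)
        exact (LinearMap.toContinuousLinearMap (Matrix.toEuclideanLin A)).le_opNorm y
    _ = opNorm A * ‖y‖ ^ 2 := by ring

/-- Both `dI - A` and `dI + A` are PSD when `A` is Hermitian with `opNorm A = d`,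
after scaling by a nonneg real `c`. -/
lemma aux_psd (A : Matrix D D ℂ) (hA : A.IsHermitian) (d : ℝ) (hd : opNorm A = d)
    (c : ℝ) (hc : 0 ≤ c) (ε : ℝ) (hε : ε = 1 ∨ ε = -1) :
    ((c : ℂ) • ((d : ℂ) • (1 : Matrix D D ℂ) + (ε : ℂ) • A)).PosSemidef := by
  rw [Matrix.posSemidef_iff_dotProduct_mulVec]
  constructor
  · have hstar : ∀ r : ℝ, star (r : ℂ) = (r : ℂ) := fun r => Complex.conj_ofReal r
    simp [Matrix.IsHermitian, Matrix.conjTranspose_smul, Matrix.conjTranspose_add,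
      Matrix.conjTranspose_one, hA.eq, hstar]
  · intro x
    have hexp : ((c : ℂ) • ((d : ℂ) • (1 : Matrix D D ℂ) + (ε : ℂ) • A)) *ᵥ x
        = (c : ℂ) • ((d : ℂ) • x + (ε : ℂ) • (A *ᵥ x)) := by
      rw [Matrix.smul_mulVec, Matrix.add_mulVec, Matrix.smul_mulVec,
        Matrix.smul_mulVec, Matrix.one_mulVec]
    rw [hexp]
    have hq := aux_herm_form_real A hA x
    set q := star x ⬝ᵥ A *ᵥ x with hqdef
    have hb := aux_bound A x
    rw [hd] at hb
    set N := ‖(WithLp.equiv 2 (D → ℂ)).symm x‖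
    have hsf := aux_self_form x
    have habs : |q.re| ≤ d * N ^ 2 := le_trans (Complex.abs_re_le_norm q) hb
    have hform : star x ⬝ᵥ ((c : ℂ) • ((d : ℂ) • x + (ε : ℂ) • (A *ᵥ x)))
        = ((c * (d * N ^ 2 + ε * q.re) : ℝ) : ℂ) := by
      rw [dotProduct_smul, dotProduct_add, dotProduct_smul,
        dotProduct_smul, hsf, ← hqdef, hq]
      simp only [smul_eq_mul, Complex.ofReal_re]
      push_cast
      ring
    rw [hform]
    rw [Complex.zero_le_real]
    apply mul_nonneg hc
    rcases hε with h | h <;> rw [h] <;> cases' abs_le.mp habs with h1 h2 <;> linarith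

end Aux

/-- Properties of the multiplicative adversary witness `Γ_m = I + γ(dI − Γ)`
(part of Claim `madvadv`). -/
theorem mult_witness_properties {D : Type*} [Fintype D] [DecidableEq D]
    (J σ Γ : Matrix D D ℂ) (hJ : J = Matrix.of fun _ _ => (1 : ℂ))
    (hσherm : σ.IsHermitian) (hσdiag : ∀ x, σ x x = 1)
    (lam : ℝ) (hlam : 0 < lam)
    (hσlam : (J - σ) ⊙ (J - σ) = (lam : ℂ) • (J - σ))
    (hΓherm : Γ.IsHermitian) (hΓσ : Γ ⊙ (J - σ) = (lam : ℂ) • Γ)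
    (d : ℝ) (hd : opNorm Γ = d)
    (v : EuclideanSpace ℂ D) (hv : ‖v‖ = 1)
    (heig : Γ.mulVec v = (d : ℂ) • (v : D → ℂ))
    (γ : ℝ) (hγ : 0 < γ)
    (Γm : Matrix D D ℂ) (hΓm : Γm = 1 + (γ : ℂ) • ((d : ℂ) • (1 : Matrix D D ℂ) - Γ)) :
    (Γm * outer v).trace = 1 ∧
    (Γm * (σ ⊙ outer v)).trace = 1 + lam * γ * d ∧
    (Γm - 1).PosSemidef ∧ (((1 + 2 * γ * d : ℝ) : ℂ) • (1 : Matrix D D ℂ) - Γm).PosSemidef := by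
  set u : D → ℂ := (v : D → ℂ) with hu
  -- basic scalar facts
  have normv : star u ⬝ᵥ u = 1 := by
    have h : star u ⬝ᵥ u = (inner ℂ v v : ℂ) := by
      rw [dotProduct_comm]; rfl
    rw [h, inner_self_eq_norm_sq_to_K, hv]
    norm_num
  have hΓv : star u ⬝ᵥ Γ *ᵥ u = (d : ℂ) := by
    rw [heig, dotProduct_smul, normv, smul_eq_mul, mul_one]
  -- trace of A * outer u
  have tr_outer : ∀ A : Matrix D D ℂ, (A * outer u).trace = star u ⬝ᵥ A *ᵥ u := by
    intro A
    simp only [Matrix.trace, Matrix.diag_apply, Matrix.mul_apply, outer, Matrix.of_apply,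
      Matrix.mulVec, dotProduct, Pi.star_apply, Finset.mul_sum, starRingEnd_apply]
    exact Finset.sum_congr rfl fun x _ => Finset.sum_congr rfl fun y _ => by ring
  have tr_o : (outer u).trace = 1 := by
    have := tr_outer 1
    rwa [one_mul, Matrix.one_mulVec, normv] at this
  have tr_Γo : (Γ * outer u).trace = (d : ℂ) := by rw [tr_outer, hΓv]
  -- entrywise key fact
  have key : ∀ x y, Γ x y * σ y x = (1 - (lam : ℂ)) * Γ x y := by
    intro x y
    have h0 := congrFun (congrFun hΓσ x) y
    simp only [Matrix.hadamard_apply, hJ, Matrix.sub_apply, Matrix.of_apply,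
      Matrix.smul_apply, smul_eq_mul] at h0
    by_cases hz : Γ x y = 0
    · simp [hz]
    · have hσxy : σ x y = 1 - (lam : ℂ) := by
        have h1 : Γ x y * (1 - σ x y) = Γ x y * (lam : ℂ) := by rw [h0]; ring
        have h2 := mul_left_cancel₀ hz h1
        linear_combination -h2
      have hσyx : σ y x = 1 - (lam : ℂ) := by
        rw [← hσherm.apply y x, hσxy]
        simp [Complex.star_def, map_sub, Complex.conj_ofReal]
      rw [hσyx]; ring
  -- trace of (σ ⊙ outer u)
  have tr_B : (σ ⊙ outer u).trace = 1 := by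
    simp only [Matrix.trace, Matrix.diag_apply, Matrix.hadamard_apply, outer, Matrix.of_apply,
      hσdiag, one_mul]
    have : ∀ x, u x * starRingEnd ℂ (u x) = star (u x) * u x := fun x => by
      rw [starRingEnd_apply]; ring
    rw [Finset.sum_congr rfl fun x _ => this x]
    exact normv
  -- trace of Γ * (σ ⊙ outer u)
  have tr_ΓB : (Γ * (σ ⊙ outer u)).trace = (1 - (lam : ℂ)) * (d : ℂ) := by
    have h1 : (Γ * (σ ⊙ outer u)).trace
        = ∑ x, ∑ y, (1 - (lam : ℂ)) * (Γ x y * (u y * starRingEnd ℂ (u x))) := by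
      simp only [Matrix.trace, Matrix.diag_apply, Matrix.mul_apply, Matrix.hadamard_apply,
        outer, Matrix.of_apply]
      refine Finset.sum_congr rfl fun x _ => Finset.sum_congr rfl fun y _ => ?_
      have := key x y
      calc Γ x y * (σ y x * (u y * starRingEnd ℂ (u x)))
          = (Γ x y * σ y x) * (u y * starRingEnd ℂ (u x)) := by ring
        _ = ((1 - (lam : ℂ)) * Γ x y) * (u y * starRingEnd ℂ (u x)) := by rw [this]
        _ = (1 - (lam : ℂ)) * (Γ x y * (u y * starRingEnd ℂ (u x))) := by ring
    have h2 : (Γ * outer u).trace = ∑ x, ∑ y, Γ x y * (u y * starRingEnd ℂ (u x)) := by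
      simp only [Matrix.trace, Matrix.diag_apply, Matrix.mul_apply, outer, Matrix.of_apply]
    rw [h1]
    simp only [← Finset.mul_sum]
    rw [← h2, tr_Γo]
  -- expand Γm
  have hΓm_mul : ∀ B : Matrix D D ℂ, (Γm * B).trace
      = B.trace + (γ : ℂ) * ((d : ℂ) * B.trace - (Γ * B).trace) := by
    intro B
    rw [hΓm, add_mul, one_mul, Matrix.smul_mul, Matrix.sub_mul, Matrix.smul_mul, one_mul,
      Matrix.trace_add, Matrix.trace_smul, Matrix.trace_sub, Matrix.trace_smul]
    simp [smul_eq_mul]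
  refine ⟨?_, ?_, ?_, ?_⟩
  · rw [hΓm_mul, tr_o, tr_Γo]; ring
  · rw [hΓm_mul, tr_B, tr_ΓB]
    push_cast
    ring
  · have h := aux_psd Γ hΓherm d hd γ hγ.le (-1) (Or.inr rfl)
    have heq : Γm - 1 = (γ : ℂ) • ((d : ℂ) • (1 : Matrix D D ℂ) + ((-1 : ℝ) : ℂ) • Γ) := by
      rw [hΓm]
      push_cast
      module
    rwa [heq]
  · have h := aux_psd Γ hΓherm d hd γ hγ.le 1 (Or.inl rfl)
    have heq : ((1 + 2 * γ * d : ℝ) : ℂ) • (1 : Matrix D D ℂ) - Γm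
        = (γ : ℂ) • ((d : ℂ) • (1 : Matrix D D ℂ) + ((1 : ℝ) : ℂ) • Γ) := by
      rw [hΓm]
      push_cast
      module
    rwa [heq]
end

section
/- Let Γ' be a Hermitian matrix on a finite index set D, d = ‖Γ'‖ its operator norm, and Δ a positive semidefinite matrix with unit diagonal such that I + Γ' ∘ (J − Δ) ⪰ 0 and I − Γ' ∘ (J − Δ) ⪰ 0. For γ > 0 set c = 1 + γ and Γ_m = (I + γ(dI − Γ'))/(1 + γ(d − b)) for any b ≤ d making the denominator positive. Then Γ_m ∘ (cΔ − J) ⪰ 0 and Γ_m ∘ (cJ − Δ) ⪰ 0, i.e., c⁻¹Γ_m ⪯ Γ_m ∘ Δ ⪯ c·Γ_m. -/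
open Matrix
open scoped ComplexOrder

lemma psd_smul_real {n : Type*} [Fintype n] {A : Matrix n n ℂ} (hA : A.PosSemidef)
    {a : ℝ} (ha : 0 ≤ a) : ((a : ℂ) • A).PosSemidef := by
  refine posSemidef_iff_dotProduct_mulVec.mpr ⟨?_, ?_⟩
  · unfold Matrix.IsHermitian
    rw [conjTranspose_smul, hA.1.eq]
    congr 1
    simp [RCLike.star_def]
  · intro x
    rw [smul_mulVec, dotProduct_smul, smul_eq_mul]
    exact mul_nonneg (by exact_mod_cast ha) (hA.dotProduct_mulVec_nonneg x)

lemma schur_psd {n : Type*} [Fintype n] [DecidableEq n] {A B : Matrix n n ℂ}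
    (hA : A.PosSemidef) (hB : B.PosSemidef) : (A ⊙ B).PosSemidef := by
  obtain ⟨C, hC⟩ : ∃ C : Matrix n n ℂ, B = Cᴴ * C := by
    open scoped MatrixOrder in
    refine ⟨CFC.sqrt B, ?_⟩
    have h0 : 0 ≤ B := hB.nonneg
    rw [← Matrix.star_eq_conjTranspose, (CFC.sqrt_nonneg B).isSelfAdjoint.star_eq,
      CFC.sqrt_mul_sqrt_self B h0]
  refine posSemidef_iff_dotProduct_mulVec.mpr ⟨?_, ?_⟩
  · unfold Matrix.IsHermitian
    ext i j
    simp only [conjTranspose_apply, hadamard_apply, star_mul']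
    rw [← conjTranspose_apply, ← conjTranspose_apply, hA.1.eq, hB.1.eq, mul_comm]
  · intro x
    have key : dotProduct (star x) ((A ⊙ B) *ᵥ x)
        = ∑ k, dotProduct (star fun i => C k i * x i) (A *ᵥ fun i => C k i * x i) := by
      have h1 : dotProduct (star x) ((A ⊙ B) *ᵥ x)
          = ∑ i, ∑ j, ∑ k, star (C k i * x i) * (A i j * (C k j * x j)) := by
        simp only [dotProduct, mulVec, hadamard_apply, hC, Matrix.mul_apply,
          conjTranspose_apply, Finset.mul_sum, Finset.sum_mul, Pi.star_apply, star_mul']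
        refine Finset.sum_congr rfl fun i _ => Finset.sum_congr rfl fun j _ =>
          Finset.sum_congr rfl fun k _ => by ring
      rw [h1]
      have h2 : ∀ i ∈ Finset.univ, ∑ j, ∑ k, star (C k i * x i) * (A i j * (C k j * x j))
          = ∑ k, ∑ j, star (C k i * x i) * (A i j * (C k j * x j)) :=
        fun i _ => Finset.sum_comm
      rw [Finset.sum_congr rfl h2, Finset.sum_comm]
      simp only [dotProduct, mulVec, Pi.star_apply, Finset.mul_sum]
    rw [key]
    exact Finset.sum_nonneg fun k _ => hA.dotProduct_mulVec_nonneg _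

lemma psd_of_norm_le {n : Type*} [Fintype n] [DecidableEq n] {A : Matrix n n ℂ}
    (hA : A.IsHermitian) {d : ℝ} (hd : opNorm A ≤ d) :
    ((d : ℂ) • (1 : Matrix n n ℂ) - A).PosSemidef := by
  have hherm : ((d : ℂ) • (1 : Matrix n n ℂ) - A).IsHermitian := by
    unfold Matrix.IsHermitian
    rw [conjTranspose_sub, conjTranspose_smul, hA.eq, conjTranspose_one]
    congr 1
    simp [RCLike.star_def]
  refine PosSemidef.of_dotProduct_mulVec_nonneg hherm fun x => ?_
  set z := dotProduct (star x) (((d : ℂ) • (1 : Matrix n n ℂ) - A) *ᵥ x) with hz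
  have hself : star z = z := by
    nth_rewrite 1 [hz]
    rw [star_dotProduct, star_star, star_mulVec, hherm.eq, ← dotProduct_mulVec, ← hz]
  rw [Complex.nonneg_iff]
  constructor
  · -- real part
    set T := LinearMap.toContinuousLinearMap (Matrix.toEuclideanLin A) with hT
    set y : EuclideanSpace ℂ n := (WithLp.equiv 2 (n → ℂ)).symm x with hy
    have hinner : (inner ℂ y (T y) : ℂ) = dotProduct (star x) (A *ᵥ x) := by
      rw [hT]
      show (inner ℂ y ((Matrix.toEuclideanLin A) y) : ℂ) = _
      rw [dotProduct_comm]; rfl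
    have hbound : Complex.re (dotProduct (star x) (A *ᵥ x)) ≤ d * ‖y‖ ^ 2 := by
      rw [← hinner]
      calc Complex.re (inner ℂ y (T y) : ℂ) ≤ ‖(inner ℂ y (T y) : ℂ)‖ := Complex.re_le_norm _
        _ ≤ ‖y‖ * ‖T y‖ := norm_inner_le_norm _ _
        _ ≤ ‖y‖ * (‖T‖ * ‖y‖) := by
            gcongr; exact T.le_opNorm y
        _ ≤ ‖y‖ * (d * ‖y‖) := by
            have : ‖T‖ ≤ d := hd
            gcongr
        _ = d * ‖y‖ ^ 2 := by ring
    have hxx : dotProduct (star x) x = (‖y‖ ^ 2 : ℝ) := by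
      have : (inner ℂ y y : ℂ) = dotProduct (star x) x := by
        rw [dotProduct_comm]; rfl
      rw [← this, inner_self_eq_norm_sq_to_K]
      norm_cast
    have h1 : z = (d : ℂ) * ((‖y‖ ^ 2 : ℝ) : ℂ) - dotProduct (star x) (A *ᵥ x) := by
      rw [hz, sub_mulVec, dotProduct_sub, smul_mulVec, one_mulVec, dotProduct_smul,
        smul_eq_mul, hxx]
    rw [h1]
    simp only [Complex.sub_re, Complex.mul_re, Complex.ofReal_re, Complex.ofReal_im,
      mul_zero, sub_zero]
    linarith [hbound]
  · -- imaginary part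
    have := congrArg Complex.im hself
    simp only [Complex.star_def, Complex.conj_im] at this
    linarith

/-- An additive adversary witness, rescaled, yields a multiplicative adversary witness
with `c = 1 + γ` (part of Claim `madvadv-limit`). -/
theorem additive_to_multiplicative_witness {D : Type*} [Fintype D] [DecidableEq D]
    (J Γ' Δ : Matrix D D ℂ) (hJ : J = Matrix.of fun _ _ => (1 : ℂ))
    (hΓherm : Γ'.IsHermitian) (d : ℝ) (hd : opNorm Γ' = d)
    (hΔ : Δ.PosSemidef) (hΔdiag : ∀ x, Δ x x = 1)
    (hplus : ((1 : Matrix D D ℂ) + Γ' ⊙ (J - Δ)).PosSemidef)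
    (hminus : ((1 : Matrix D D ℂ) - Γ' ⊙ (J - Δ)).PosSemidef)
    (γ : ℝ) (hγ : 0 < γ) (c : ℝ) (hc : c = 1 + γ)
    (b : ℝ) (hb : b ≤ d) (hpos : 0 < 1 + γ * (d - b))
    (Γm : Matrix D D ℂ)
    (hΓm : Γm = ((1 + γ * (d - b) : ℝ) : ℂ)⁻¹ •
      ((1 : Matrix D D ℂ) + (γ : ℂ) • ((d : ℂ) • (1 : Matrix D D ℂ) - Γ'))) :
    (Γm ⊙ ((c : ℂ) • Δ - J)).PosSemidef ∧ (Γm ⊙ ((c : ℂ) • J - Δ)).PosSemidef ∧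
    (Γm ⊙ Δ - (c : ℂ)⁻¹ • Γm).PosSemidef ∧ ((c : ℂ) • Γm - Γm ⊙ Δ).PosSemidef := by
  have hc0 : (0 : ℝ) < c := by rw [hc]; linarith
  set s : ℝ := 1 + γ * (d - b) with hs
  have hP1 : ((d : ℂ) • (1 : Matrix D D ℂ) - Γ').PosSemidef :=
    psd_of_norm_le hΓherm hd.le
  have hP2 : ((((d : ℂ) • (1 : Matrix D D ℂ) - Γ') ⊙ Δ)).PosSemidef := schur_psd hP1 hΔ
  have id1 : Γm ⊙ ((c : ℂ) • Δ - J) = ((s⁻¹ * γ : ℝ) : ℂ) •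
      (((1 : Matrix D D ℂ) + Γ' ⊙ (J - Δ)) +
        (γ : ℂ) • (((d : ℂ) • (1 : Matrix D D ℂ) - Γ') ⊙ Δ)) := by
    ext i j
    simp only [hΓm, hJ, hc, Matrix.hadamard_apply, Matrix.smul_apply, Matrix.sub_apply,
      Matrix.add_apply, Matrix.one_apply, Matrix.of_apply, smul_eq_mul]
    by_cases hij : i = j
    · simp only [hij, if_true, hΔdiag j]
      push_cast
      ring
    · simp only [hij, if_false]
      push_cast
      ring
  have id2 : Γm ⊙ ((c : ℂ) • J - Δ) = ((s⁻¹ * γ : ℝ) : ℂ) •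
      (((1 : Matrix D D ℂ) - Γ' ⊙ (J - Δ)) +
        (γ : ℂ) • ((d : ℂ) • (1 : Matrix D D ℂ) - Γ')) := by
    ext i j
    simp only [hΓm, hJ, hc, Matrix.hadamard_apply, Matrix.smul_apply, Matrix.sub_apply,
      Matrix.add_apply, Matrix.one_apply, Matrix.of_apply, smul_eq_mul]
    by_cases hij : i = j
    · simp only [hij, if_true, hΔdiag j]
      push_cast
      ring
    · simp only [hij, if_false]
      push_cast
      ring
  have hsγ : (0 : ℝ) ≤ s⁻¹ * γ := mul_nonneg (inv_nonneg.mpr hpos.le) hγ.le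
  have part1 : (Γm ⊙ ((c : ℂ) • Δ - J)).PosSemidef := by
    rw [id1]
    exact psd_smul_real (hplus.add (psd_smul_real hP2 hγ.le)) hsγ
  have part2 : (Γm ⊙ ((c : ℂ) • J - Δ)).PosSemidef := by
    rw [id2]
    exact psd_smul_real (hminus.add (psd_smul_real hP1 hγ.le)) hsγ
  have id3 : Γm ⊙ Δ - (c : ℂ)⁻¹ • Γm = ((c⁻¹ : ℝ) : ℂ) • (Γm ⊙ ((c : ℂ) • Δ - J)) := by
    ext i j
    have hcne : (c : ℂ) ≠ 0 := by exact_mod_cast hc0.ne'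
    simp only [hJ, Matrix.hadamard_apply, Matrix.smul_apply, Matrix.sub_apply,
      Matrix.of_apply, smul_eq_mul, Complex.ofReal_inv]
    field_simp
  have id4 : (c : ℂ) • Γm - Γm ⊙ Δ = Γm ⊙ ((c : ℂ) • J - Δ) := by
    ext i j
    simp only [hJ, Matrix.hadamard_apply, Matrix.smul_apply, Matrix.sub_apply,
      Matrix.of_apply, smul_eq_mul]
    ring
  refine ⟨part1, part2, ?_, ?_⟩
  · rw [id3]
    exact psd_smul_real part1 (inv_nonneg.mpr hc0.le)
  · rw [id4]
    exact part2
end
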